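/- Let A be a Banach algebra with nonzero multiplicative continuous functional e and P = {ν ∈ A : e(ν) = 1, ‖ν‖ = 1}, nonempty and closed under multiplication. Suppose A is 'topological right stationary': there is a net (ν_α) in P such that for each φ ∈ A* there is c₀ ∈ ℂ with R_{ν_α} φ → c₀·e in the weak* topology of A*, where (R_ν φ)(μ) = φ(μν). Then for every μ ∈ A with inf{‖μν‖ : ν ∈ P} ≠ 0, we have |e(μ)| = inf {‖μ ν‖ : ν ∈ P}. -/

import Mathlib

open Filter Topology

/-- A multiplicative continuous nonzero functional on a Banach algebra is contractive. -/
lemma mult_functional_abs_le {A : Type*} [NormedRing A] [NormedAlgebra ℂ A]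
    (e : A →L[ℂ] ℂ) (hmul : ∀ a b : A, e (a * b) = e a * e b) (x : A) :
    ‖e x‖ ≤ ‖x‖ := by
  by_contra h
  push_neg at h
  have hex : e x ≠ 0 := by
    intro h0
    rw [h0] at h
    simp at h
    exact absurd h (not_lt.2 (norm_nonneg x))
  set y : A := (e x)⁻¹ • x with hy
  have hey : e y = 1 := by
    simp [hy, inv_mul_cancel₀ hex]
  have hny : ‖y‖ < 1 := by
    rw [hy, norm_smul, norm_inv]
    rw [inv_mul_lt_iff₀ (norm_pos_iff.mpr hex), mul_one]
    exact h
  have hpow : ∀ n : ℕ, e (y ^ (n + 1)) = 1 := by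
    intro n
    induction n with
    | zero => simpa using hey
    | succ k ih => rw [pow_succ, hmul, ih, hey, one_mul]
  have hbound : ∀ n : ℕ, (1 : ℝ) ≤ ‖e‖ * ‖y‖ ^ (n + 1) := by
    intro n
    calc (1 : ℝ) = ‖e (y ^ (n + 1))‖ := by rw [hpow]; simp
      _ = ‖e (y ^ (n + 1))‖ := by rfl
      _ ≤ ‖e‖ * ‖y ^ (n + 1)‖ := e.le_opNorm _
      _ ≤ ‖e‖ * ‖y‖ ^ (n + 1) :=
          mul_le_mul_of_nonneg_left (norm_pow_le' y (Nat.succ_pos n)) (norm_nonneg e)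
  have htend : Filter.Tendsto (fun n : ℕ => ‖e‖ * ‖y‖ ^ (n + 1)) atTop (nhds 0) := by
    have h0 : Filter.Tendsto (fun n : ℕ => ‖y‖ ^ n) atTop (nhds 0) :=
      tendsto_pow_atTop_nhds_zero_of_lt_one (norm_nonneg y) hny
    have h1 : Filter.Tendsto (fun n : ℕ => ‖y‖ ^ (n + 1)) atTop (nhds 0) :=
      h0.comp (tendsto_add_atTop_nat 1)
    simpa using h1.const_mul ‖e‖
  obtain ⟨n, hn⟩ := (htend.eventually (gt_mem_nhds one_pos)).exists
  exact absurd (hbound n) (not_le.2 hn)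

/-- If a Banach algebra `A` with nonzero multiplicative continuous functional `e` and
`P = {ν : e(ν) = 1, ‖ν‖ = 1}` (nonempty, closed under multiplication) is topological right
stationary — there is a net `(ν_α)` in `P` such that for each `φ ∈ A*` there is `c₀ ∈ ℂ`
with `R_{ν_α} φ → c₀·e` weak* — then for every `μ ∈ A` with `inf {‖μν‖ : ν ∈ P} ≠ 0` one has
`|e(μ)| = inf {‖μν‖ : ν ∈ P}`. -/
theorem abs_e_eq_inf_of_right_stationary
    {A : Type*} [NormedRing A] [NormedAlgebra ℂ A] [CompleteSpace A]
    (e : A →L[ℂ] ℂ) (he : e ≠ 0) (hmul : ∀ a b : A, e (a * b) = e a * e b)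
    (P : Set A) (hP : P = {ν : A | e ν = 1 ∧ ‖ν‖ = 1})
    (hPne : P.Nonempty) (hPmul : ∀ a ∈ P, ∀ b ∈ P, a * b ∈ P)
    {ι : Type*} [Preorder ι] [Nonempty ι] [IsDirected ι (· ≤ ·)]
    (ν' : ι → A) (hν' : ∀ i, ν' i ∈ P)
    (hstat : ∀ φ : A →L[ℂ] ℂ, ∃ c₀ : ℂ,
      ∀ μ : A, Tendsto (fun i => φ (μ * ν' i)) atTop (nhds (c₀ * e μ))) :
    ∀ μ : A, sInf ((fun ν => ‖μ * ν‖) '' P) ≠ 0 →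
      ‖e μ‖ = sInf ((fun ν => ‖μ * ν‖) '' P) := by
  intro μ hζne
  haveI : (atTop : Filter ι).NeBot := atTop_neBot_iff.mpr ⟨‹_›, ‹_›⟩
  have habs : ∀ x : A, ‖e x‖ ≤ ‖x‖ := mult_functional_abs_le e hmul
  set S : Set ℝ := (fun ν => ‖μ * ν‖) '' P with hS
  set ζ : ℝ := sInf S with hζ
  have hSne : S.Nonempty := hPne.image _
  have hSbdd : BddBelow S := ⟨0, fun x hx => by
    obtain ⟨ν, _, rfl⟩ := hx; exact norm_nonneg _⟩
  have hζnonneg : 0 ≤ ζ := le_csInf hSne (by rintro x ⟨ν, _, rfl⟩; exact norm_nonneg _)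
  have hζpos : 0 < ζ := lt_of_le_of_ne hζnonneg (Ne.symm hζne)
  have hζle : ∀ ν ∈ P, ζ ≤ ‖μ * ν‖ := fun ν hν => csInf_le hSbdd ⟨ν, hν, rfl⟩
  -- upper bound : |e μ| ≤ ζ
  have hub : ‖e μ‖ ≤ ζ := by
    refine le_csInf hSne ?_
    rintro x ⟨ν, hν, rfl⟩
    have heν : e ν = 1 := (hP ▸ hν).1
    calc ‖e μ‖ = ‖e (μ * ν)‖ := by rw [hmul, heν, mul_one]
      _ ≤ ‖μ * ν‖ := habs _
  -- the image set μ * P is convex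
  have hPconv : Convex ℝ P := by
    intro a ha b hb s t hs ht hst
    rw [hP] at ha hb ⊢
    have hekey : e (s • a + t • b) = 1 := by
      rw [map_add, e.map_smul_of_tower, e.map_smul_of_tower, ha.1, hb.1,
        Complex.real_smul, Complex.real_smul, mul_one, mul_one, ← Complex.ofReal_add, hst,
        Complex.ofReal_one]
    constructor
    · exact hekey
    · have h1 : ‖s • a + t • b‖ ≤ 1 := by
        calc ‖s • a + t • b‖ ≤ ‖s • a‖ + ‖t • b‖ := norm_add_le _ _
          _ = s * ‖a‖ + t * ‖b‖ := by
              rw [norm_smul, norm_smul, Real.norm_of_nonneg hs, Real.norm_of_nonneg ht]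
          _ = 1 := by rw [ha.2, hb.2]; simpa using hst
      have h2 : (1 : ℝ) ≤ ‖s • a + t • b‖ := by
        have : ‖e (s • a + t • b)‖ ≤ ‖s • a + t • b‖ := habs _
        rwa [hekey, norm_one] at this
      exact le_antisymm h1 h2
  have hTconv : Convex ℝ (closure ((fun ν => μ * ν) '' P)) := by
    refine Convex.closure ?_
    rintro x ⟨a, ha, rfl⟩ y ⟨b, hb, rfl⟩ s t hs ht hst
    refine ⟨s • a + t • b, hPconv ha hb hs ht hst, ?_⟩
    simp [mul_add, mul_smul_comm]
  set T : Set A := closure ((fun ν => μ * ν) '' P) with hT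
  have hTnorm : ∀ x ∈ T, ζ ≤ ‖x‖ := by
    intro x hx
    have hcl : T ⊆ closure {y : A | ζ ≤ ‖y‖} := by
      refine closure_mono ?_
      rintro y ⟨ν, hν, rfl⟩
      exact hζle ν hν
    have := hcl hx
    rwa [IsClosed.closure_eq (isClosed_le continuous_const continuous_norm)] at this
  -- separation
  have hdisj : Disjoint (Metric.ball (0 : A) ζ) T := by
    rw [Set.disjoint_left]
    intro x hx hxT
    rw [Metric.mem_ball, dist_zero_right] at hx
    exact absurd (hTnorm x hxT) (not_le.2 hx)
  obtain ⟨f, u, hfball, hfT⟩ :=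
    geometric_hahn_banach_open (convex_ball (0 : A) ζ) Metric.isOpen_ball hTconv hdisj
  have hu0 : 0 < u := by
    have h0 : (0 : A) ∈ Metric.ball (0 : A) ζ := by simpa [Metric.mem_ball] using hζpos
    simpa using hfball 0 h0
  have hfne : f ≠ 0 := by
    intro h0
    obtain ⟨ν₀, hν₀⟩ := hPne
    have : u ≤ f (μ * ν₀) := hfT _ (subset_closure ⟨ν₀, hν₀, rfl⟩)
    rw [h0] at this
    simp at this
    linarith
  have hfnorm : 0 < ‖f‖ := norm_pos_iff.mpr hfne
  -- f is bounded by u on the closed ball of radius ζ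
  have hfcball : ∀ x : A, ‖x‖ ≤ ζ → |f x| ≤ u := by
    have hball : ∀ x : A, ‖x‖ < ζ → |f x| ≤ u := by
      intro x hx
      have h1 : f x < u := hfball x (by simpa [Metric.mem_ball, dist_zero_right] using hx)
      have h2 : f (-x) < u := hfball (-x) (by simpa [Metric.mem_ball, dist_zero_right] using hx)
      rw [map_neg] at h2
      rw [abs_le]
      constructor <;> linarith
    intro x hx
    have hsub : Metric.closedBall (0 : A) ζ ⊆ {y : A | |f y| ≤ u} := by
      rw [← closure_ball (0 : A) (ne_of_gt hζpos)]
      refine closure_minimal ?_ ?_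
      · intro y hy
        rw [Metric.mem_ball, dist_zero_right] at hy
        exact hball y hy
      · have : Continuous fun y : A => |f y| := f.continuous.abs
        exact isClosed_le this continuous_const
    exact hsub (by simpa [Metric.mem_closedBall, dist_zero_right] using hx)
  have hfle : ‖f‖ ≤ u / ζ := by
    refine ContinuousLinearMap.opNorm_le_bound f (by positivity) ?_
    intro x
    rcases eq_or_ne x 0 with rfl | hx0
    · simp
    · have hxn : 0 < ‖x‖ := norm_pos_iff.mpr hx0
      have := hfcball ((ζ / ‖x‖) • x) (by
        rw [norm_smul, Real.norm_of_nonneg (by positivity)]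
        rw [div_mul_cancel₀ _ (ne_of_gt hxn)])
      rw [map_smul, smul_eq_mul, abs_mul, abs_of_nonneg (by positivity)] at this
      rw [Real.norm_eq_abs]
      calc |f x| = (ζ / ‖x‖ * |f x|) * (‖x‖ / ζ) := by
            field_simp
          _ ≤ u * (‖x‖ / ζ) := by
            apply mul_le_mul_of_nonneg_right this (by positivity)
          _ = u / ζ * ‖x‖ := by ring
  have hfu : ζ * ‖f‖ ≤ u := by
    rw [le_div_iff₀ hζpos] at hfle
    linarith [hfle]
  -- normalize and extend to a complex functional
  set g : A →L[ℝ] ℝ := ‖f‖⁻¹ • f with hg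
  have hgnorm : ‖g‖ = 1 := by
    rw [hg]
    rw [norm_smul (‖f‖⁻¹) f]
    simp [Real.norm_eq_abs, abs_of_pos (inv_pos.mpr hfnorm), inv_mul_cancel₀ (ne_of_gt hfnorm)]
  have hgT : ∀ x ∈ T, ζ ≤ g x := by
    intro x hx
    have h1 : u ≤ f x := hfT x hx
    have h2 : ζ * ‖f‖ ≤ f x := le_trans hfu h1
    rw [hg]
    simp only [ContinuousLinearMap.coe_smul', Pi.smul_apply, smul_eq_mul]
    calc ζ = (ζ * ‖f‖) * ‖f‖⁻¹ := by field_simp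
      _ ≤ f x * ‖f‖⁻¹ := mul_le_mul_of_nonneg_right h2 (by positivity)
      _ = ‖f‖⁻¹ * f x := mul_comm _ _
  set ψ : A →L[ℂ] ℂ := StrongDual.extendRCLike g with hψ
  have hψnorm : ‖ψ‖ = 1 := by rw [hψ, ContinuousLinearMap.norm_extendTo𝕜', hgnorm]
  have hψre : ∀ x : A, (ψ x).re = g x := by
    intro x
    rw [hψ, ContinuousLinearMap.extendTo𝕜'_apply]
    simp [Complex.ext_iff]
  have hψT : ∀ x ∈ T, ζ ≤ ‖ψ x‖ := by
    intro x hx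
    calc ζ ≤ g x := hgT x hx
      _ = (ψ x).re := (hψre x).symm
      _ ≤ ‖ψ x‖ := Complex.re_le_norm _
  -- apply stationarity to ψ
  obtain ⟨c₀, hc₀⟩ := hstat ψ
  -- |c₀| ≤ 1
  obtain ⟨ν₀, hν₀⟩ := hPne
  have hc₀le : ‖c₀‖ ≤ 1 := by
    have htend : Tendsto (fun i => ‖ψ (ν₀ * ν' i)‖) atTop
        (nhds (‖c₀ * e ν₀‖)) :=
      (continuous_norm.tendsto _).comp (hc₀ ν₀)
    have heν₀ : e ν₀ = 1 := (hP ▸ hν₀).1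
    have hbnd : ∀ i, ‖ψ (ν₀ * ν' i)‖ ≤ 1 := by
      intro i
      have hmem : ν₀ * ν' i ∈ P := hPmul ν₀ hν₀ (ν' i) (hν' i)
      have hn1 : ‖ν₀ * ν' i‖ = 1 := (hP ▸ hmem).2
      calc ‖ψ (ν₀ * ν' i)‖ = ‖ψ (ν₀ * ν' i)‖ := by rfl
        _ ≤ ‖ψ‖ * ‖ν₀ * ν' i‖ := ψ.le_opNorm _
        _ = 1 := by rw [hψnorm, hn1, one_mul]
    have := le_of_tendsto htend (Filter.Eventually.of_forall hbnd)
    rwa [heν₀, mul_one] at this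
  -- ζ ≤ |c₀| * |e μ|
  have hlb : ζ ≤ ‖c₀‖ * ‖e μ‖ := by
    have htend : Tendsto (fun i => ‖ψ (μ * ν' i)‖) atTop
        (nhds (‖c₀ * e μ‖)) :=
      (continuous_norm.tendsto _).comp (hc₀ μ)
    have hbnd : ∀ i, ζ ≤ ‖ψ (μ * ν' i)‖ := fun i =>
      hψT _ (subset_closure ⟨ν' i, hν' i, rfl⟩)
    have := ge_of_tendsto htend (Filter.Eventually.of_forall hbnd)
    rwa [norm_mul] at this
  have hlb' : ζ ≤ ‖e μ‖ := by
    calc ζ ≤ ‖c₀‖ * ‖e μ‖ := hlb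
      _ ≤ 1 * ‖e μ‖ :=
        mul_le_mul_of_nonneg_right hc₀le (norm_nonneg _)
      _ = ‖e μ‖ := one_mul _
  exact le_antisymm hub hlb'
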